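/- Let g be an n-dimensional real Lie algebra with a basis e₁,…,eₙ such that span{e₁,…,e_i} is an ideal of g for every 1 ≤ i ≤ n, let α be the inner product on g making e₁,…,eₙ orthonormal, and write [e_i,e_j] = Σ_k c_{ij}^k e_k for the structure constants. Then α is cyclic, i.e. α([x,y],z) + α([y,z],x) + α([z,x],y) = 0 for all x,y,z ∈ g, if and only if c_{ik}^j = c_{jk}^i for all 1 ≤ i < j < k ≤ n. -/

import Mathlib

noncomputable section

/-- The inner product making the basis `e` orthonormal. -/
def basisInner {V : Type*} [AddCommGroup V] [Module ℝ V] {ι : Type*} [Fintype ι]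
    (e : Module.Basis ι ℝ V) (x y : V) : ℝ :=
  ∑ k, e.repr x k * e.repr y k

lemma sum_lie' {g : Type*} [LieRing g] {ι : Type*} (s : Finset ι) (f : ι → g) (w : g) :
    ⁅∑ i ∈ s, f i, w⁆ = ∑ i ∈ s, ⁅f i, w⁆ := by
  induction s using Finset.cons_induction with
  | empty => simp
  | cons a s ha ih => simp [Finset.sum_cons, add_lie, ih]

lemma lie_sum' {g : Type*} [LieRing g] {ι : Type*} (s : Finset ι) (f : ι → g) (w : g) :
    ⁅w, ∑ i ∈ s, f i⁆ = ∑ i ∈ s, ⁅w, f i⁆ := by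
  induction s using Finset.cons_induction with
  | empty => simp
  | cons a s ha ih => simp [Finset.sum_cons, lie_add, ih]

lemma bi_basis {g : Type*} [LieRing g] [LieAlgebra ℝ g] {n : ℕ}
    (e : Module.Basis (Fin n) ℝ g) (w : g) (l : Fin n) :
    basisInner e w (e l) = e.repr w l := by
  simp [basisInner, Finsupp.single_apply, mul_ite]

lemma expand {g : Type*} [LieRing g] [LieAlgebra ℝ g] {n : ℕ}
    (e : Module.Basis (Fin n) ℝ g) (x y z : g) :
    basisInner e ⁅x, y⁆ z =
      ∑ i, ∑ j, ∑ k, e.repr x i * e.repr y j * e.repr z k * e.repr ⁅e i, e j⁆ k := by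
  have h1 : ⁅x, y⁆ = ∑ i, ∑ j, (e.repr x i * e.repr y j) • ⁅e i, e j⁆ := by
    conv_lhs => rw [← e.sum_repr x, ← e.sum_repr y]
    rw [sum_lie']
    refine Finset.sum_congr rfl fun i _ => ?_
    rw [lie_sum']
    refine Finset.sum_congr rfl fun j _ => ?_
    rw [smul_lie, lie_smul, smul_smul]
  rw [h1]
  simp only [basisInner, map_sum, map_smul, Finsupp.coe_finset_sum, Finsupp.coe_smul,
    Finset.sum_apply, Pi.smul_apply, smul_eq_mul, Finset.sum_mul]
  rw [Finset.sum_comm]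
  refine Finset.sum_congr rfl fun i _ => ?_
  rw [Finset.sum_comm]
  refine Finset.sum_congr rfl fun j _ => ?_
  refine Finset.sum_congr rfl fun k _ => ?_
  ring

lemma rot {n : ℕ} (f : Fin n → Fin n → Fin n → ℝ) :
    ∑ i, ∑ j, ∑ k, f i j k = ∑ i, ∑ j, ∑ k, f k i j := by
  rw [Finset.sum_comm]
  exact Finset.sum_congr rfl fun j _ => Finset.sum_comm

/-- For a Lie algebra with a full flag of ideals spanned by an
(orthonormal) basis `e₁,…,eₙ`, the inner product making the basis orthonormal is cyclic
iff the structure constants satisfy `c_{ik}^j = c_{jk}^i` for all `i < j < k`. -/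
theorem cyclic_iff_structure_constants
    {g : Type*} [LieRing g] [LieAlgebra ℝ g]
    (n : ℕ) (e : Module.Basis (Fin n) ℝ g)
    (hideal : ∀ i : Fin n, ∀ x : g, ∀ y ∈ Submodule.span ℝ (⇑e '' {j | j ≤ i}),
      ⁅x, y⁆ ∈ Submodule.span ℝ (⇑e '' {j | j ≤ i})) :
    (∀ x y z : g,
        basisInner e ⁅x, y⁆ z + basisInner e ⁅y, z⁆ x + basisInner e ⁅z, x⁆ y = 0)
      ↔ (∀ i j k : Fin n, i < j → j < k →
          e.repr ⁅e i, e k⁆ j = e.repr ⁅e j, e k⁆ i) := by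
  -- vanishing when the second index is below the output index
  have hz : ∀ i j k : Fin n, j < k → e.repr ⁅e i, e j⁆ k = 0 := by
    intro i j k hjk
    have hmem : ⁅e i, e j⁆ ∈ Submodule.span ℝ (⇑e '' {l | l ≤ j}) :=
      hideal j (e i) (e j) (Submodule.subset_span ⟨j, le_refl j, rfl⟩)
    have hsupp := (e.mem_span_image).mp hmem
    by_contra h
    exact absurd (hsupp (Finsupp.mem_support_iff.mpr h)) (by simpa using hjk.not_ge)
  -- vanishing when the first index is below the output index
  have hz' : ∀ i j k : Fin n, i < k → e.repr ⁅e i, e j⁆ k = 0 := by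
    intro i j k hik
    rw [← lie_skew, map_neg, Finsupp.neg_apply, hz j i k hik, neg_zero]
  constructor
  · intro h i j k hij hjk
    have h0 := h (e i) (e j) (e k)
    rw [bi_basis, bi_basis, bi_basis] at h0
    have h1 : e.repr ⁅e i, e j⁆ k = 0 := hz i j k hjk
    have h2 : e.repr ⁅e k, e i⁆ j = 0 := hz k i j hij
    have h3 : e.repr ⁅e j, e k⁆ i = 0 := by linarith
    rw [h3, hz' i k j hij]
  · intro h
    -- all structure constants with distinct indices vanish
    have czero : ∀ i j k : Fin n, i ≠ j → j ≠ k → i ≠ k → e.repr ⁅e i, e j⁆ k = 0 := by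
      intro i j k hij hjk hik
      rcases lt_trichotomy j k with hlt | heq | hgt
      · exact hz i j k hlt
      · exact absurd heq hjk
      rcases lt_trichotomy i k with hlt | heq | hgt'
      · exact hz' i j k hlt
      · exact absurd heq hik
      -- k < i and k < j
      rcases lt_trichotomy i j with hlt | heq | hgt''
      · -- k < i < j : c_{ij}^k = c_{kj}^i = 0
        rw [← h k i j hgt' hlt, hz' k j i hgt']
      · exact absurd heq hij
      · -- k < j < i
        rw [← lie_skew, map_neg, Finsupp.neg_apply, ← h k j i hgt hgt'',
          hz' k i j hgt, neg_zero]
    have Czero : ∀ i j k : Fin n,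
        e.repr ⁅e i, e j⁆ k + e.repr ⁅e j, e k⁆ i + e.repr ⁅e k, e i⁆ j = 0 := by
      intro i j k
      have skew : ∀ a b c : Fin n, e.repr ⁅e a, e b⁆ c = - e.repr ⁅e b, e a⁆ c := by
        intro a b c
        rw [← lie_skew, map_neg, Finsupp.neg_apply]
      by_cases hij : i = j
      · subst hij
        have : e.repr ⁅e i, e i⁆ k = 0 := by simp
        rw [this, skew i k i]
        ring
      by_cases hjk : j = k
      · subst hjk
        have : e.repr ⁅e j, e j⁆ i = 0 := by simp
        rw [this, skew j i j]
        ring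
      by_cases hik : i = k
      · subst hik
        have : e.repr ⁅e i, e i⁆ j = 0 := by simp
        rw [this, skew i j i]
        ring
      rw [czero i j k hij hjk hik, czero j k i hjk (Ne.symm hik) (Ne.symm hij),
        czero k i j (Ne.symm hik) hij (Ne.symm hjk)]
      ring
    intro x y z
    rw [expand e x y z, expand e y z x, expand e z x y]
    rw [show (∑ i, ∑ j, ∑ k, e.repr y i * e.repr z j * e.repr x k * e.repr ⁅e i, e j⁆ k)
        = ∑ i, ∑ j, ∑ k, e.repr y j * e.repr z k * e.repr x i * e.repr ⁅e j, e k⁆ i from by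
      rw [rot fun i j k => e.repr y j * e.repr z k * e.repr x i * e.repr ⁅e j, e k⁆ i]]
    rw [show (∑ i, ∑ j, ∑ k, e.repr z i * e.repr x j * e.repr y k * e.repr ⁅e i, e j⁆ k)
        = ∑ i, ∑ j, ∑ k, e.repr z k * e.repr x i * e.repr y j * e.repr ⁅e k, e i⁆ j from by
      rw [rot fun i j k => e.repr z i * e.repr x j * e.repr y k * e.repr ⁅e i, e j⁆ k]]
    rw [← Finset.sum_add_distrib, ← Finset.sum_add_distrib]
    rw [← Finset.sum_const_zero (s := (Finset.univ : Finset (Fin n)))]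
    refine Finset.sum_congr rfl fun i _ => ?_
    rw [← Finset.sum_add_distrib, ← Finset.sum_add_distrib,
      ← Finset.sum_const_zero (s := (Finset.univ : Finset (Fin n)))]
    refine Finset.sum_congr rfl fun j _ => ?_
    rw [← Finset.sum_add_distrib, ← Finset.sum_add_distrib,
      ← Finset.sum_const_zero (s := (Finset.univ : Finset (Fin n)))]
    refine Finset.sum_congr rfl fun k _ => ?_
    linear_combination (e.repr x i * e.repr y j * e.repr z k) * Czero i j k

end
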